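/- Let r ≥ 3 and let G be an r-partite graph on parts (V_1,...,V_r) of size n with minimum cross-degree at least (1 − δ)n where 0 ≤ δ ≤ 1/(2r). Then for every vertex x of G and every I ⊆ [r] not containing the index of the part of x, the number of cliques in K_I(G) containing x is at most k_{I∖{i}}(G) for each i ∈ I with x adjacent to part V_i — in particular, for every j ∈ [r] and z ∈ V_j and I ⊆ [r] with j ∈ I, the number of cliques of K_I(G) containing z is at most 2·k_I(G)/n. -/

import Mathlib

open Finset
open scoped Classical

/-- The set of cliques of `G` having exactly one vertex in part `V_i` for each `i ∈ I`. -/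
noncomputable def partCliques {V : Type*} [Fintype V] [DecidableEq V] {r : ℕ}
    (G : SimpleGraph V) (P : V → Fin r) (I : Finset (Fin r)) : Finset (Finset V) :=
  Finset.univ.filter fun S => G.IsClique (S : Set V) ∧ S.image P = I ∧ S.card = I.card


lemma lemA {V : Type*} [Fintype V] [DecidableEq V] {r : ℕ}
    (G : SimpleGraph V) (P : V → Fin r) (I : Finset (Fin r))
    (j : Fin r) (z : V) (hz : P z = j) (hjI : j ∈ I) :
    ((partCliques G P I).filter fun K => z ∈ K).card ≤
      (partCliques G P (I.erase j)).card := by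
  apply Finset.card_le_card_of_injOn (fun K => K.erase z)
  · intro K hK
    simp only [Finset.mem_coe, mem_filter, partCliques, Finset.mem_univ, true_and] at hK ⊢
    obtain ⟨⟨hcl, hIm, hcard⟩, hzK⟩ := hK
    have hinj : Set.InjOn P (K : Set V) := by
      apply Finset.injOn_of_card_image_eq
      rw [hIm, hcard]
    refine ⟨hcl.subset ?_, ?_, ?_⟩
    · exact_mod_cast Finset.erase_subset _ _
    · ext a
      simp only [mem_image, mem_erase]
      constructor
      · rintro ⟨b, ⟨hbz, hbK⟩, rfl⟩
        refine ⟨?_, hIm ▸ mem_image_of_mem P hbK⟩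
        rw [← hz]
        exact fun h => hbz (hinj (by exact_mod_cast hbK) (by exact_mod_cast hzK) h)
      · rintro ⟨haj, haI⟩
        rw [← hIm] at haI
        obtain ⟨b, hbK, rfl⟩ := mem_image.mp haI
        exact ⟨b, ⟨fun h => haj (by rw [h, hz]), hbK⟩, rfl⟩
    · rw [Finset.card_erase_of_mem hzK, Finset.card_erase_of_mem hjI, hcard]
  · intro K₁ h₁ K₂ h₂ h
    simp only [coe_filter, Set.mem_setOf_eq] at h₁ h₂
    have := congrArg (insert z) h
    rwa [Finset.insert_erase h₁.2, Finset.insert_erase h₂.2] at this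


lemma lemB {V : Type*} [Fintype V] [DecidableEq V] {r n : ℕ}
    (δ : ℝ) (hδ0 : 0 ≤ δ) (hδ1 : δ ≤ 1 / (2 * r)) (hr : 0 < r)
    (G : SimpleGraph V) (P : V → Fin r)
    (hsize : ∀ i : Fin r, (Finset.univ.filter fun v => P v = i).card = n)
    (hdeg : ∀ (ℓ : Fin r) (v : V), P v ≠ ℓ →
      (1 - δ) * n ≤ ((Finset.univ.filter fun u => P u = ℓ ∧ G.Adj v u).card : ℝ))
    (I : Finset (Fin r)) (j : Fin r) (hjI : j ∈ I) :
    ((partCliques G P (I.erase j)).card : ℝ) * (n / 2) ≤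
      ((partCliques G P I).card : ℝ) := by
  classical
  set B := partCliques G P (I.erase j) with hB
  set N : Finset V → Finset V :=
    fun T => Finset.univ.filter (fun v => P v = j ∧ ∀ t ∈ T, G.Adj v t) with hN
  -- Claim 1: lower bound on N T for T ∈ B
  have claim1 : ∀ T ∈ B, (n : ℝ) / 2 ≤ ((N T).card : ℝ) := by
    intro T hT
    simp only [hB, partCliques, mem_filter, Finset.mem_univ, true_and] at hT
    obtain ⟨hcl, hIm, hcard⟩ := hT
    have hTr : (T.card : ℝ) ≤ r := by
      have : T.card = (I.erase j).card := hcard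
      have h2 : (I.erase j).card ≤ r := by
        calc (I.erase j).card ≤ I.card := Finset.card_erase_le
        _ ≤ (Finset.univ : Finset (Fin r)).card := Finset.card_le_card (Finset.subset_univ _)
        _ = r := by simp
      exact_mod_cast this ▸ h2
    have htj : ∀ t ∈ T, P t ≠ j := by
      intro t ht
      have : P t ∈ I.erase j := hIm ▸ mem_image_of_mem P ht
      exact (Finset.mem_erase.mp this).1
    set Vj := Finset.univ.filter (fun v => P v = j) with hVj
    set M : V → Finset V := fun t => Vj.filter (fun v => ¬ G.Adj t v) with hM
    have hMcard : ∀ t ∈ T, ((M t).card : ℝ) ≤ δ * n := by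
      intro t ht
      have hdt := hdeg j t (htj t ht)
      have hsplit : (Vj.filter (fun v => G.Adj t v)).card + (M t).card = Vj.card :=
        Finset.card_filter_add_card_filter_not _
      have heq : (Finset.univ.filter fun u => P u = j ∧ G.Adj t u) =
          Vj.filter (fun v => G.Adj t v) := by
        rw [hVj, Finset.filter_filter]
      rw [heq] at hdt
      have hVjn : Vj.card = n := hsize j
      have : ((M t).card : ℝ) = n - ((Vj.filter (fun v => G.Adj t v)).card : ℝ) := by
        have := hsplit
        rw [hVjn] at this
        push_cast [← this]
        ring
      rw [this]
      nlinarith [hdt]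
    have hsub : Vj \ N T ⊆ T.biUnion M := by
      intro v hv
      simp only [hVj, Finset.mem_sdiff, mem_filter, Finset.mem_univ, true_and, hN,
        not_and, not_forall] at hv
      obtain ⟨hvj, hv2⟩ := hv
      obtain ⟨t, ht, hadj⟩ := hv2 hvj
      simp only [Finset.mem_biUnion, hM, mem_filter, hVj, Finset.mem_univ, true_and]
      exact ⟨t, ht, hvj, fun h => hadj h.symm⟩
    have hNsub : N T ⊆ Vj := by
      intro v hv
      simp only [hN, mem_filter, Finset.mem_univ, true_and] at hv
      simp [hVj, hv.1]
    have hkey : (n : ℕ) ≤ (N T).card + (T.biUnion M).card := by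
      have h1 : (Vj \ N T).card ≤ (T.biUnion M).card := Finset.card_le_card hsub
      have h2 : (Vj \ N T).card = Vj.card - (N T).card := Finset.card_sdiff_of_subset hNsub
      have h3 : (N T).card ≤ Vj.card := Finset.card_le_card hNsub
      have h4 : Vj.card = n := hsize j
      omega
    have hbiU : ((T.biUnion M).card : ℝ) ≤ (T.card : ℝ) * (δ * n) := by
      calc ((T.biUnion M).card : ℝ) ≤ ((∑ t ∈ T, (M t).card : ℕ) : ℝ) := by
            exact_mod_cast Finset.card_biUnion_le
        _ = ∑ t ∈ T, ((M t).card : ℝ) := by push_cast; ring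
        _ ≤ ∑ t ∈ T, (δ * n) := Finset.sum_le_sum hMcard
        _ = (T.card : ℝ) * (δ * n) := by rw [Finset.sum_const]; ring
    have hrδ : (r : ℝ) * δ ≤ 1 / 2 := by
      have hrpos : (0 : ℝ) < r := by exact_mod_cast hr
      calc (r:ℝ) * δ ≤ (r:ℝ) * (1/(2*(r:ℝ))) := mul_le_mul_of_nonneg_left hδ1 hrpos.le
        _ = 1/2 := by field_simp
    have hn : (0:ℝ) ≤ (n:ℝ) := by positivity
    have hkeyR : (n : ℝ) ≤ ((N T).card : ℝ) + ((T.biUnion M).card : ℝ) := by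
      exact_mod_cast hkey
    have h5 : ((T.biUnion M).card : ℝ) ≤ (n:ℝ)/2 := by
      calc ((T.biUnion M).card : ℝ) ≤ (T.card : ℝ) * (δ * n) := hbiU
        _ ≤ (r : ℝ) * (δ * n) := mul_le_mul_of_nonneg_right hTr (mul_nonneg hδ0 hn)
        _ = ((r:ℝ) * δ) * n := by ring
        _ ≤ (1/2) * n := mul_le_mul_of_nonneg_right hrδ hn
        _ = (n:ℝ)/2 := by ring
    linarith
  -- Claim 2: sum ≤ card of K_I via injection
  have claim2 : ∑ T ∈ B, ((N T).card) ≤ (partCliques G P I).card := by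
    rw [← Finset.card_sigma]
    apply Finset.card_le_card_of_injOn (fun p => insert p.2 p.1)
    · rintro ⟨T, v⟩ hp
      simp only [Finset.mem_coe, Finset.mem_sigma] at hp
      obtain ⟨hT, hv⟩ := hp
      simp only [hB, partCliques, mem_filter, Finset.mem_univ, true_and] at hT
      simp only [hN, mem_filter, Finset.mem_univ, true_and] at hv
      obtain ⟨hcl, hIm, hcard⟩ := hT
      obtain ⟨hvj, hvadj⟩ := hv
      have hvT : v ∉ T := by
        intro h
        have : P v ∈ I.erase j := hIm ▸ mem_image_of_mem P h
        rw [hvj] at this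
        exact (Finset.mem_erase.mp this).1 rfl
      simp only [Finset.mem_coe, partCliques, mem_filter, Finset.mem_univ, true_and]
      refine ⟨?_, ?_, ?_⟩
      · rw [Finset.coe_insert]
        apply hcl.insert
        intro b hb _
        exact hvadj b (by exact_mod_cast hb)
      · rw [Finset.image_insert, hIm, hvj, Finset.insert_erase hjI]
      · rw [Finset.card_insert_of_notMem hvT, hcard, Finset.card_erase_of_mem hjI]
        have : 0 < I.card := Finset.card_pos.mpr ⟨j, hjI⟩
        omega
    · rintro ⟨T₁, v₁⟩ h₁ ⟨T₂, v₂⟩ h₂ h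
      simp only [Finset.mem_coe, Finset.mem_sigma] at h₁ h₂
      obtain ⟨hT₁, hv₁⟩ := h₁
      obtain ⟨hT₂, hv₂⟩ := h₂
      simp only [hB, partCliques, mem_filter, Finset.mem_univ, true_and] at hT₁ hT₂
      simp only [hN, mem_filter, Finset.mem_univ, true_and] at hv₁ hv₂
      have hnotj : ∀ {T : Finset V}, T.image P = I.erase j → ∀ t ∈ T, P t ≠ j := by
        intro T hIm t ht
        have : P t ∈ I.erase j := hIm ▸ mem_image_of_mem P ht
        exact (Finset.mem_erase.mp this).1
      have hvT₁ : v₁ ∉ T₁ := fun h' => hnotj hT₁.2.1 v₁ h' hv₁.1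
      have hvT₂ : v₂ ∉ T₂ := fun h' => hnotj hT₂.2.1 v₂ h' hv₂.1
      simp only at h
      have hveq : v₁ = v₂ := by
        have : v₂ ∈ insert v₁ T₁ := h ▸ Finset.mem_insert_self v₂ T₂
        rcases Finset.mem_insert.mp this with h' | h'
        · exact h'.symm
        · exact absurd hv₂.1 (hnotj hT₁.2.1 v₂ h')
      subst hveq
      have hTeq : T₁ = T₂ := by
        have := congrArg (fun s => Finset.erase s v₁) h
        simpa [Finset.erase_insert hvT₁, Finset.erase_insert hvT₂] using this
      simp [hTeq]
  -- combine
  calc (B.card : ℝ) * (n / 2) = ∑ _T ∈ B, ((n:ℝ)/2) := by rw [Finset.sum_const]; ring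
    _ ≤ ∑ T ∈ B, ((N T).card : ℝ) := Finset.sum_le_sum claim1
    _ = ((∑ T ∈ B, (N T).card : ℕ) : ℝ) := by push_cast; ring
    _ ≤ ((partCliques G P I).card : ℝ) := by exact_mod_cast claim2


/-- bounds on the number of cliques of K_I(G) containing a fixed vertex. -/
theorem stmt_13 {V : Type*} [Fintype V] [DecidableEq V] {r n : ℕ} (hr : 3 ≤ r)
    (δ : ℝ) (hδ0 : 0 ≤ δ) (hδ1 : δ ≤ 1 / (2 * r))
    (G : SimpleGraph V) (P : V → Fin r)
    (hpart : ∀ u v, G.Adj u v → P u ≠ P v)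
    (hsize : ∀ i : Fin r, (Finset.univ.filter fun v => P v = i).card = n)
    (hdeg : ∀ (ℓ : Fin r) (v : V), P v ≠ ℓ →
      (1 - δ) * n ≤ ((Finset.univ.filter fun u => P u = ℓ ∧ G.Adj v u).card : ℝ)) :
    (∀ (x : V) (I : Finset (Fin r)), P x ∉ I → ∀ i ∈ I,
      (∃ y, P y = i ∧ G.Adj x y) →
      ((partCliques G P I).filter fun K => x ∈ K).card ≤
        (partCliques G P (I.erase i)).card) ∧
    (∀ (j : Fin r) (z : V) (I : Finset (Fin r)), P z = j → j ∈ I →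
      ((((partCliques G P I).filter fun K => z ∈ K).card : ℝ)) ≤
        2 * ((partCliques G P I).card : ℝ) / n) := by
  constructor
  · intro x I hxI i hi hy
    have hempty : ((partCliques G P I).filter fun K => x ∈ K) = ∅ := by
      rw [Finset.filter_eq_empty_iff]
      intro K hK hxK
      simp only [partCliques, mem_filter, Finset.mem_univ, true_and] at hK
      exact hxI (hK.2.1 ▸ Finset.mem_image_of_mem P hxK)
    simp [hempty]
  · intro j z I hz hjI
    have hn : 0 < n := by
      rw [← hsize j]
      exact Finset.card_pos.mpr ⟨z, by simp [hz]⟩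
    have hnR : (0:ℝ) < n := by exact_mod_cast hn
    have hAB := lemA G P I j z hz hjI
    have hBK := lemB δ hδ0 hδ1 (by omega) G P hsize hdeg I j hjI
    have hABR : (((partCliques G P I).filter fun K => z ∈ K).card : ℝ) ≤
        ((partCliques G P (I.erase j)).card : ℝ) := by exact_mod_cast hAB
    rw [le_div_iff₀ hnR]
    nlinarith [hABR, hBK]
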